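/- Let x and t be real numbers with 1 - 2tx + t² > 0 and x ≠ t. Then 3·F(t,x)⁵ = F^{(1)}(t,x)/(x-t)³ + F^{(2)}(t,x)/(x-t)². -/

import Mathlib

lemma legendre_gq_deriv (x s : ℝ) :
    HasDerivAt (fun s : ℝ => 1 - 2 * s * x + s ^ 2) (-(2 * x) + 2 * s) s := by
  have h1 : HasDerivAt (fun s : ℝ => 1 - 2 * s * x) (-(2 * x)) s := by
    simpa using (((hasDerivAt_id s).const_mul (2 : ℝ)).mul_const x).const_sub 1
  exact (h1.add (hasDerivAt_pow 2 s)).congr_deriv (by norm_num)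

lemma legendre_f_deriv (x s : ℝ) (hs : 0 < 1 - 2 * s * x + s ^ 2) :
    HasDerivAt (fun s : ℝ => (1 - 2 * s * x + s ^ 2) ^ (-(1 : ℝ) / 2))
      ((x - s) * (1 - 2 * s * x + s ^ 2) ^ (-(3 : ℝ) / 2)) s := by
  have := (legendre_gq_deriv x s).rpow_const (p := -(1 : ℝ) / 2) (Or.inl hs.ne')
  convert this using 1
  have : -(1 : ℝ) / 2 - 1 = -(3 : ℝ) / 2 := by norm_num
  rw [this]; ring

lemma legendre_f2_deriv (x s : ℝ) (hs : 0 < 1 - 2 * s * x + s ^ 2) :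
    HasDerivAt (fun s : ℝ => (x - s) * (1 - 2 * s * x + s ^ 2) ^ (-(3 : ℝ) / 2))
      (-((1 - 2 * s * x + s ^ 2) ^ (-(3 : ℝ) / 2))
        + 3 * (x - s) ^ 2 * (1 - 2 * s * x + s ^ 2) ^ (-(5 : ℝ) / 2)) s := by
  have h1 : HasDerivAt (fun s : ℝ => x - s) (-1) s := by
    simpa using (hasDerivAt_id s).const_sub x
  have h2 := (legendre_gq_deriv x s).rpow_const (p := -(3 : ℝ) / 2) (Or.inl hs.ne')
  have h3 : -(3 : ℝ) / 2 - 1 = -(5 : ℝ) / 2 := by norm_num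
  rw [h3] at h2
  beta_reduce at h2
  exact (h1.mul h2).congr_deriv (by ring)

theorem legendre_genFun_pow_five (x t : ℝ) (h : 1 - 2 * t * x + t ^ 2 > 0) (hxt : x ≠ t) :
    3 * ((1 - 2 * t * x + t ^ 2) ^ (-(1 : ℝ) / 2)) ^ 5
      = iteratedDeriv 1 (fun s : ℝ => (1 - 2 * s * x + s ^ 2) ^ (-(1 : ℝ) / 2)) t / (x - t) ^ 3
        + iteratedDeriv 2 (fun s : ℝ => (1 - 2 * s * x + s ^ 2) ^ (-(1 : ℝ) / 2)) t / (x - t) ^ 2 := by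
  set f : ℝ → ℝ := fun s => (1 - 2 * s * x + s ^ 2) ^ (-(1 : ℝ) / 2) with hf
  have hopen : IsOpen {s : ℝ | 0 < 1 - 2 * s * x + s ^ 2} :=
    isOpen_lt continuous_const (by continuity)
  have hmem : t ∈ {s : ℝ | 0 < 1 - 2 * s * x + s ^ 2} := h
  have hev : deriv f =ᶠ[nhds t]
      (fun s => (x - s) * (1 - 2 * s * x + s ^ 2) ^ (-(3 : ℝ) / 2)) := by
    filter_upwards [hopen.mem_nhds hmem] with s hs
    exact (legendre_f_deriv x s hs).deriv
  have hd1 : iteratedDeriv 1 f t = (x - t) * (1 - 2 * t * x + t ^ 2) ^ (-(3 : ℝ) / 2) := by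
    rw [iteratedDeriv_one]
    exact (legendre_f_deriv x t h).deriv
  have hd2 : iteratedDeriv 2 f t
      = -((1 - 2 * t * x + t ^ 2) ^ (-(3 : ℝ) / 2))
        + 3 * (x - t) ^ 2 * (1 - 2 * t * x + t ^ 2) ^ (-(5 : ℝ) / 2) := by
    rw [iteratedDeriv_succ (n := 1), iteratedDeriv_one]
    rw [hev.deriv_eq]
    exact (legendre_f2_deriv x t h).deriv
  rw [hd1, hd2]
  have hpow : ((1 - 2 * t * x + t ^ 2) ^ (-(1 : ℝ) / 2)) ^ 5
      = (1 - 2 * t * x + t ^ 2) ^ (-(5 : ℝ) / 2) := by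
    rw [← Real.rpow_natCast ((1 - 2 * t * x + t ^ 2) ^ (-(1 : ℝ) / 2)) 5,
      ← Real.rpow_mul h.le]
    norm_num
  rw [hpow]
  have hxt' : x - t ≠ 0 := sub_ne_zero.mpr hxt
  field_simp
  ring
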